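/- (Entropy decay bound under non-negative curvature.) Let ε > 0 and t₀ > 0, and let h : ℝ → ℝ be differentiable on [t₀, ∞) with h'(s) ≤ −(ε·h(s) − 1)²/(2s) for all s ≥ t₀. Then for every t > t₀: h(t) ≤ 1/ε + 2/(ε²·log(t/t₀)). -/

import Mathlib

/-- **Entropy decay bound under non-negative curvature.** If `h` is differentiable
on `[t₀, ∞)` (with `t₀ > 0`) and `h'(s) ≤ −(ε·h(s) − 1)²/(2s)` there, then for
every `t > t₀`, `h(t) ≤ 1/ε + 2/(ε²·log(t/t₀))`. -/
theorem entropy_decay_nonneg_curvature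
    (ε t₀ : ℝ) (hε : 0 < ε) (ht₀ : 0 < t₀)
    (h h' : ℝ → ℝ)
    (hderiv : ∀ s ∈ Set.Ici t₀, HasDerivWithinAt h (h' s) (Set.Ici t₀) s)
    (hineq : ∀ s ∈ Set.Ici t₀, h' s ≤ -(ε * h s - 1) ^ 2 / (2 * s)) :
    ∀ t : ℝ, t₀ < t → h t ≤ 1 / ε + 2 / (ε ^ 2 * Real.log (t / t₀)) := by
  intro t ht
  have hL : 0 < Real.log (t / t₀) := Real.log_pos (by rw [lt_div_iff₀ ht₀]; linarith)
  set L := Real.log (t / t₀) with hLdef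
  have hLB : 0 < 2 / (ε ^ 2 * L) := by positivity
  by_cases hc : ε * h t - 1 ≤ 0
  · have h1 : h t ≤ 1 / ε := by rw [le_div_iff₀ hε]; linarith [mul_comm ε (h t)]
    linarith
  push_neg at hc
  have hcont : ContinuousOn h (Set.Ici t₀) := fun s hs => (hderiv s hs).continuousWithinAt
  -- h is antitone on Ici t₀
  have hanti : AntitoneOn h (Set.Ici t₀) := by
    apply antitoneOn_of_deriv_nonpos (convex_Ici t₀) hcont
    · intro s hs
      rw [interior_Ici] at hs
      exact ((hderiv s (le_of_lt (Set.mem_Ioi.mp hs))).hasDerivAt (Ici_mem_nhds hs)).differentiableAt.differentiableWithinAt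
    · intro s hs
      rw [interior_Ici] at hs
      rw [((hderiv s (le_of_lt (Set.mem_Ioi.mp hs))).hasDerivAt (Ici_mem_nhds hs)).deriv]
      have h2 := hineq s (le_of_lt (Set.mem_Ioi.mp hs))
      have hs0 : (0:ℝ) < s := lt_trans ht₀ hs
      have h3 : -(ε * h s - 1) ^ 2 / (2 * s) ≤ 0 := by
        apply div_nonpos_of_nonpos_of_nonneg
        · nlinarith [sq_nonneg (ε * h s - 1)]
        · linarith
      linarith
  -- positivity of g on Icc t₀ t
  have hgpos : ∀ s ∈ Set.Icc t₀ t, 0 < ε * h s - 1 := by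
    intro s hs
    have : h t ≤ h s := hanti hs.1 (le_trans hs.1 hs.2) hs.2
    nlinarith
  -- φ := g⁻¹ - (ε/2) log is monotone on Icc t₀ t
  set φ : ℝ → ℝ := fun s => (ε * h s - 1)⁻¹ - ε / 2 * Real.log s with hφdef
  have hφmono : MonotoneOn φ (Set.Icc t₀ t) := by
    apply monotoneOn_of_deriv_nonneg (convex_Icc t₀ t)
    · apply ContinuousOn.sub
      · apply ContinuousOn.inv₀
        · exact ((hcont.mono (Set.Icc_subset_Ici_self)).const_smul ε).sub continuousOn_const
        · intro s hs; exact (hgpos s hs).ne'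
      · exact (Real.continuousOn_log.mono (fun s hs => by
          simp only [Set.mem_compl_iff, Set.mem_singleton_iff]
          exact (lt_of_lt_of_le ht₀ hs.1).ne')).const_smul (ε/2)
    all_goals {
      intro s hs
      rw [interior_Icc] at hs
      have hs0 : (0:ℝ) < s := lt_trans ht₀ hs.1
      have hsm : s ∈ Set.Icc t₀ t := ⟨le_of_lt hs.1, le_of_lt hs.2⟩
      have hdh : HasDerivAt h (h' s) s :=
        (hderiv s (le_of_lt hs.1)).hasDerivAt (Ici_mem_nhds hs.1)
      have hg : HasDerivAt (fun s => ε * h s - 1) (ε * h' s) s :=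
        (hdh.const_mul ε).sub_const 1
      have hne : ε * h s - 1 ≠ 0 := (hgpos s hsm).ne'
      have hginv := hg.inv hne
      have hlog : HasDerivAt (fun s => ε / 2 * Real.log s) (ε / 2 * s⁻¹) s :=
        (Real.hasDerivAt_log hs0.ne').const_mul (ε/2)
      have hφd : HasDerivAt φ (-(ε * h' s) / (ε * h s - 1) ^ 2 - ε / 2 * s⁻¹) s :=
        hginv.sub hlog
      first
      | exact hφd.differentiableAt.differentiableWithinAt
      | { rw [hφd.deriv]
          have h2 := hineq s (le_of_lt hs.1)
          have hg2 : 0 < (ε * h s - 1) ^ 2 := by positivity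
          rw [sub_nonneg, le_div_iff₀ hg2]
          have h4 : h' s * (2 * s) ≤ -(ε * h s - 1) ^ 2 := by
            rw [le_div_iff₀ (by linarith : (0:ℝ) < 2 * s)] at h2
            linarith
          have key : ε / 2 * s⁻¹ * (ε * h s - 1) ^ 2
              = ε * (ε * h s - 1) ^ 2 / (2 * s) := by
            field_simp
          rw [key, div_le_iff₀ (by linarith : (0:ℝ) < 2 * s)]
          nlinarith [mul_le_mul_of_nonneg_left h4 hε.le] }
    }
  have hkey := hφmono (Set.left_mem_Icc.mpr (le_of_lt ht)) (Set.right_mem_Icc.mpr (le_of_lt ht)) (le_of_lt ht)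
  simp only [hφdef] at hkey
  have hlogdiv : Real.log (t / t₀) = Real.log t - Real.log t₀ :=
    Real.log_div (by linarith) ht₀.ne'
  have hg0pos : 0 < ε * h t₀ - 1 := hgpos t₀ (Set.left_mem_Icc.mpr (le_of_lt ht))
  have hinvpos : 0 < (ε * h t₀ - 1)⁻¹ := by positivity
  -- 1/c ≥ 1/g(t₀) + εL/2 > εL/2
  have h6 : ε * L / 2 < (ε * h t - 1)⁻¹ := by
    rw [hLdef, hlogdiv]; linarith
  -- conclude c < 2/(εL)
  have h7 : (ε * h t - 1) * ((ε * h t - 1)⁻¹) = 1 := mul_inv_cancel₀ hc.ne'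
  have h8 : (ε * h t - 1) * (ε * L) < 2 := by nlinarith
  have hεL : 0 < ε ^ 2 * L := by positivity
  rw [div_add_div _ _ hε.ne' hεL.ne', le_div_iff₀ (by positivity : (0:ℝ) < ε * (ε ^ 2 * L))]
  nlinarith [mul_lt_mul_of_pos_left h8 hε]
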